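/- For any continuous v on [-1,1], the defect v − P^- v has Legendre expansion starting at degree k: ∫_{-1}^1 (v − P^- v) L_m ds = 0 for all 0 ≤ m ≤ k−1, and the coefficient of L_k in the expansion of v − P^- v equals −v(1) + (1/2)∫_{-1}^1 v Σ_{m=0}^{k} (2m+1) L_m ds. -/

import Mathlib

open Polynomial Finset

/-- Legendre polynomial of degree `m` on `[-1,1]`, normalized so `L_m(1) = 1`. -/
noncomputable def leg (m : ℕ) : Polynomial ℝ :=
  Polynomial.C (((2 : ℝ) ^ m * Nat.factorial m)⁻¹) *
    (fun p => Polynomial.derivative p)^[m] ((Polynomial.X ^ 2 - 1) ^ m)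

/-- Degree-`k` right Gauss–Radau projection on `[-1,1]`. -/
def IsRadauNeg (k : ℕ) (v : ℝ → ℝ) (p : Polynomial ℝ) : Prop :=
  p.natDegree ≤ k ∧
  (∀ w : Polynomial ℝ, w.natDegree + 1 ≤ k →
    ∫ s in (-1 : ℝ)..1, (v s - p.eval s) * w.eval s = 0) ∧
  p.eval 1 = v 1

/-! ### Auxiliary definitions and lemmas -/

noncomputable abbrev qp (n : ℕ) : Polynomial ℝ := ((X : Polynomial ℝ) ^ 2 - 1) ^ n
noncomputable abbrev cc (n : ℕ) : ℝ := ((2 : ℝ) ^ n * Nat.factorial n)⁻¹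

lemma leg_def' (m : ℕ) : leg m = C (cc m) * derivative^[m] (qp m) := rfl

lemma eval_iter_deriv_qp {n j : ℕ} (h : j < n) :
    ((derivative^[j] (qp n)).eval 1 = 0) ∧ ((derivative^[j] (qp n)).eval (-1) = 0) := by
  obtain ⟨r, hr⟩ := pow_sub_dvd_iterate_derivative_pow ((X : Polynomial ℝ)^2 - 1) n j
  have hnj : n - j ≠ 0 := Nat.sub_ne_zero_of_lt h
  constructor <;> simp [hr, zero_pow hnj]

lemma poly_ftc (h : Polynomial ℝ) :
    ∫ s in (-1:ℝ)..1, (derivative h).eval s = h.eval 1 - h.eval (-1) := by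
  have := intervalIntegral.integral_eq_sub_of_hasDerivAt (f := fun x => h.eval x)
    (f' := fun x => (derivative h).eval x) (a := (-1:ℝ)) (b := 1)
    (fun x _ => h.hasDerivAt x) ((Polynomial.continuous _).intervalIntegrable _ _)
  simpa using this

lemma poly_ibp (f g : Polynomial ℝ) :
    ∫ s in (-1:ℝ)..1, f.eval s * (derivative g).eval s =
      f.eval 1 * g.eval 1 - f.eval (-1) * g.eval (-1) -
        ∫ s in (-1:ℝ)..1, (derivative f).eval s * g.eval s := by
  have h := poly_ftc (f * g)
  rw [derivative_mul] at h
  simp only [eval_add, eval_mul] at h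
  rw [intervalIntegral.integral_add
    (show IntervalIntegrable (fun s : ℝ => (derivative f).eval s * (g).eval s) MeasureTheory.volume (-1) 1 from ((Polynomial.continuous _).mul (Polynomial.continuous _)).intervalIntegrable _ _)
    (show IntervalIntegrable (fun s : ℝ => (f).eval s * (derivative g).eval s) MeasureTheory.volume (-1) 1 from ((Polynomial.continuous _).mul (Polynomial.continuous _)).intervalIntegrable _ _)] at h
  linarith

lemma orth_aux (n : ℕ) : ∀ j ≤ n, ∀ f : Polynomial ℝ,
    ∫ s in (-1:ℝ)..1, f.eval s * (derivative^[n] (qp n)).eval s =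
      (-1:ℝ)^j * ∫ s in (-1:ℝ)..1, (derivative^[j] f).eval s * (derivative^[n-j] (qp n)).eval s := by
  intro j
  induction j with
  | zero => intro _ f; simp
  | succ j ih =>
    intro hj f
    have hj' : j ≤ n := Nat.le_of_succ_le hj
    rw [ih hj' f]
    have hiter : derivative^[n-j] (qp n) = derivative (derivative^[n-(j+1)] (qp n)) := by
      have : n - j = (n - (j+1)) + 1 := by omega
      rw [this, Function.iterate_succ_apply']
    rw [hiter, poly_ibp]
    have hb := eval_iter_deriv_qp (n := n) (j := n - (j+1)) (by omega)
    rw [hb.1, hb.2, Function.iterate_succ_apply']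
    ring

lemma orth_qp {n : ℕ} {f : Polynomial ℝ} (h : f.natDegree < n) :
    ∫ s in (-1:ℝ)..1, f.eval s * (derivative^[n] (qp n)).eval s = 0 := by
  rw [orth_aux n n le_rfl f, Polynomial.iterate_derivative_eq_zero h]
  simp

lemma orth_leg {n : ℕ} {f : Polynomial ℝ} (h : f.natDegree < n) :
    ∫ s in (-1:ℝ)..1, f.eval s * (leg n).eval s = 0 := by
  simp only [leg_def', eval_mul, eval_C]
  have heq : ∀ s : ℝ, f.eval s * (cc n * (derivative^[n] (qp n)).eval s)
      = cc n * (f.eval s * (derivative^[n] (qp n)).eval s) := fun s => by ring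
  simp only [heq]
  rw [intervalIntegral.integral_const_mul, orth_qp h, mul_zero]

lemma natDegree_leg_le (m : ℕ) : (leg m).natDegree ≤ m := by
  rw [leg_def']
  refine le_trans natDegree_mul_le ?_
  rw [natDegree_C, zero_add]
  refine le_trans (Polynomial.natDegree_iterate_derivative _ _) ?_
  have h2 : ((X : Polynomial ℝ)^2 - 1).natDegree ≤ 2 := by compute_degree
  have : (qp m).natDegree ≤ 2 * m := le_trans natDegree_pow_le (by nlinarith)
  omega

lemma qp_eq_mul (n : ℕ) :
    qp n = ((X : Polynomial ℝ) - Polynomial.C 1)^n * ((X:Polynomial ℝ) - Polynomial.C (-1))^n := by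
  rw [← mul_pow]; simp only [map_one, map_neg]; ring_nf

lemma eval_one_iter (n : ℕ) : (derivative^[n] (qp n)).eval 1 = (2:ℝ)^n * Nat.factorial n := by
  rw [qp_eq_mul, Polynomial.iterate_derivative_mul, eval_finset_sum]
  rw [Finset.sum_eq_single 0]
  · have h : derivative^[n] (((X : Polynomial ℝ) - C 1)^n) = (n.factorial : Polynomial ℝ) :=
      Polynomial.iterate_derivative_X_sub_pow_self n 1
    simp only [Nat.sub_zero, Nat.choose_zero_right, Function.iterate_zero, id_eq, one_smul, h]
    simp
    ring
  · intro i hi hne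
    have hin : i ≤ n := by simp at hi; omega
    rw [Polynomial.iterate_derivative_X_sub_pow]
    have : n - (n - i) = i := by omega
    rw [this]
    simp [zero_pow hne]
  · simp

lemma eval_neg_one_iter (n : ℕ) : (derivative^[n] (qp n)).eval (-1) = (-2:ℝ)^n * Nat.factorial n := by
  rw [qp_eq_mul, Polynomial.iterate_derivative_mul, eval_finset_sum]
  rw [Finset.sum_eq_single n]
  · have h : derivative^[n] (((X : Polynomial ℝ) - C (-1))^n) = (n.factorial : Polynomial ℝ) :=
      Polynomial.iterate_derivative_X_sub_pow_self n (-1)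
    simp only [Nat.sub_self, Nat.choose_self, Function.iterate_zero, id_eq, one_smul, h]
    simp
    left; norm_num
  · intro i hi hne
    have hin : i < n := by simp at hi; omega
    rw [Polynomial.iterate_derivative_X_sub_pow (c := (-1:ℝ))]
    have hni : n - i ≠ 0 := by omega
    simp [zero_pow hni]
  · simp

lemma fact_ne (n : ℕ) : ((2:ℝ)^n * Nat.factorial n) ≠ 0 := by positivity

lemma leg_eval_one (n : ℕ) : (leg n).eval 1 = 1 := by
  have h2 := fact_ne n
  rw [leg_def', eval_mul, eval_C, eval_one_iter]
  field_simp [cc]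

lemma leg_eval_neg_one (n : ℕ) : (leg n).eval (-1) = (-1:ℝ)^n := by
  have h2 := fact_ne n
  rw [leg_def', eval_mul, eval_C, eval_neg_one_iter]
  rw [show ((-2:ℝ))^n = (-1)^n * 2^n from by rw [neg_pow]]
  simp only [cc]
  field_simp

lemma hd' : derivative ((X:Polynomial ℝ)^2 - 1) = 2 * X := by simp; norm_cast

lemma dq (n : ℕ) : derivative (qp (n+1)) = C ((n+1 : ℕ) : ℝ) * qp n * (2 * X) := by
  rw [derivative_pow, hd', Nat.add_sub_cancel]

lemma d2_qp (m : ℕ) :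
    derivative (derivative (qp (m+2))) =
      C ((2*(m+2)*(2*m+3) : ℕ) : ℝ) * qp (m+1) + C ((4*(m+1)*(m+2) : ℕ) : ℝ) * qp m := by
  rw [dq (m+1), derivative_mul, derivative_mul, derivative_C, dq m, derivative_mul,
    derivative_X]
  have h2 : derivative (2 : Polynomial ℝ) = 0 := by
    rw [show (2:Polynomial ℝ) = C 2 from by norm_cast, derivative_C]
  rw [h2]
  have hq : qp (m+1) = qp m * ((X:Polynomial ℝ)^2 - 1) := pow_succ _ _
  rw [hq]
  simp only [map_natCast]
  push_cast
  ring

lemma iter_deriv_add (p q : Polynomial ℝ) (n : ℕ) :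
    derivative^[n] (p + q) = derivative^[n] p + derivative^[n] q := by
  induction n with
  | zero => simp
  | succ n ih => simp [Function.iterate_succ_apply', ih]

lemma cc_fact1 (m : ℕ) :
    cc (m+2) * ((2*(m+2)*(2*m+3) : ℕ) : ℝ) = (2*((m:ℝ)+1)+1) * cc (m+1) := by
  have h1 := fact_ne (m+1)
  have h2 := fact_ne (m+2)
  simp only [cc]
  rw [show ((m:ℕ)+2).factorial = (m+2) * (m+1).factorial from Nat.factorial_succ (m+1)]
  field_simp
  push_cast
  ring

lemma cc_fact2 (m : ℕ) :
    cc (m+2) * ((4*(m+1)*(m+2) : ℕ) : ℝ) = cc m := by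
  have h0 := fact_ne m
  have h2 := fact_ne (m+2)
  simp only [cc]
  rw [show ((m:ℕ)+2).factorial = (m+2) * ((m+1) * m.factorial) from by
    rw [Nat.factorial_succ (m+1), Nat.factorial_succ m]]
  field_simp
  push_cast
  ring

lemma leg_rec (m : ℕ) :
    derivative (leg (m+2)) = C (2*((m:ℝ)+1)+1) * leg (m+1) + derivative (leg m) := by
  rw [leg_def' (m+2), derivative_C_mul]
  have h3 : derivative (derivative^[m+2] (qp (m+2)))
      = derivative^[m+1] (derivative (derivative (qp (m+2)))) := by
    rw [← Function.iterate_succ_apply' derivative (m+2) (qp (m+2)),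
      show (m+2).succ = m+1+2 from rfl, Function.iterate_add_apply]
    rfl
  rw [h3, d2_qp, iter_deriv_add, Polynomial.iterate_derivative_C_mul,
    Polynomial.iterate_derivative_C_mul]
  rw [mul_add, ← mul_assoc, ← mul_assoc, ← C_mul, ← C_mul, cc_fact1, cc_fact2]
  congr 1
  · rw [C_mul, leg_def' (m+1)]
    ring
  · rw [leg_def' m, derivative_C_mul, Function.iterate_succ_apply' derivative m (qp m)]

lemma leg_zero : leg 0 = 1 := by simp [leg]

lemma leg_one : leg 1 = X := by
  simp only [leg, Function.iterate_one, pow_one, hd']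
  rw [show ((2:ℝ) * Nat.factorial 1)⁻¹ = 1/2 from by norm_num]
  rw [show (2 : Polynomial ℝ) * X = C 2 * X from by norm_cast]
  rw [← mul_assoc, ← C_mul]
  norm_num

lemma telescope (k : ℕ) :
    ∑ m ∈ range (k+1), C (2*(m:ℝ)+1) * leg m = derivative (leg (k+1) + leg k) := by
  induction k with
  | zero =>
    simp [leg_zero, leg_one]
  | succ k ih =>
    rw [Finset.sum_range_succ, ih]
    rw [derivative_add, derivative_add, leg_rec k]
    push_cast
    ring

lemma kernel (k : ℕ) (f : Polynomial ℝ) (hf : f.natDegree ≤ k) :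
    ∫ s in (-1:ℝ)..1, f.eval s * (∑ m ∈ range (k+1), C (2*(m:ℝ)+1) * leg m).eval s
      = 2 * f.eval 1 := by
  have hint : ∫ s in (-1:ℝ)..1, (derivative f).eval s * (leg (k+1) + leg k).eval s = 0 := by
    by_cases h0 : f.natDegree = 0
    · obtain ⟨c, rfl⟩ := Polynomial.natDegree_eq_zero.mp h0
      simp
    · have hlt : (derivative f).natDegree < k :=
        lt_of_lt_of_le (Polynomial.natDegree_derivative_lt h0) hf
      simp only [eval_add, mul_add]
      rw [intervalIntegral.integral_add
        (show IntervalIntegrable (fun s : ℝ => (derivative f).eval s * (leg (k+1)).eval s) MeasureTheory.volume (-1) 1 from ((Polynomial.continuous _).mul (Polynomial.continuous _)).intervalIntegrable _ _)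
        (show IntervalIntegrable (fun s : ℝ => (derivative f).eval s * (leg k).eval s) MeasureTheory.volume (-1) 1 from ((Polynomial.continuous _).mul (Polynomial.continuous _)).intervalIntegrable _ _),
        orth_leg (lt_trans hlt (Nat.lt_succ_self k)), orth_leg hlt, add_zero]
  rw [telescope, poly_ibp, hint]
  rw [eval_add, eval_add, leg_eval_one, leg_eval_one, leg_eval_neg_one, leg_eval_neg_one]
  rw [show ((-1:ℝ))^(k+1) + (-1)^k = 0 from by rw [pow_succ]; ring]
  ring

theorem radau_neg_defect_coefficient (k : ℕ) (v : ℝ → ℝ)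
    (hv : ContinuousOn v (Set.Icc (-1 : ℝ) 1)) (p : Polynomial ℝ)
    (hp : IsRadauNeg k v p) :
    (∀ m : ℕ, m ≤ k - 1 → m + 1 ≤ k →
      ∫ s in (-1 : ℝ)..1, (v s - p.eval s) * (leg m).eval s = 0) ∧
    (2 * k + 1) / 2 * (∫ s in (-1 : ℝ)..1, (v s - p.eval s) * (leg k).eval s) =
      -v 1 + (1 / 2) * ∫ s in (-1 : ℝ)..1,
        v s * ∑ m ∈ Finset.range (k + 1), (2 * m + 1 : ℝ) * (leg m).eval s := by
  obtain ⟨hdeg, horth, hval⟩ := hp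
  have horthleg : ∀ m : ℕ, m + 1 ≤ k →
      ∫ s in (-1 : ℝ)..1, (v s - p.eval s) * (leg m).eval s = 0 := by
    intro m hm
    exact horth (leg m) (le_trans (Nat.add_le_add_right (natDegree_leg_le m) 1) hm)
  refine ⟨fun m _ hm => horthleg m hm, ?_⟩
  set G : Polynomial ℝ := ∑ m ∈ range (k+1), C (2*(m:ℝ)+1) * leg m with hG
  have hGev : ∀ s : ℝ, G.eval s = ∑ m ∈ range (k+1), (2*(m:ℝ)+1) * (leg m).eval s := by
    intro s; simp [hG, eval_finset_sum]
  -- integrability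
  have huIcc : Set.uIcc (-1:ℝ) 1 = Set.Icc (-1:ℝ) 1 := Set.uIcc_of_le (by norm_num)
  have hvg : ∀ g : Polynomial ℝ,
      IntervalIntegrable (fun s => v s * g.eval s) MeasureTheory.volume (-1:ℝ) 1 := by
    intro g
    apply ContinuousOn.intervalIntegrable
    rw [huIcc]
    exact hv.mul (Polynomial.continuous g).continuousOn
  have hdg : ∀ g : Polynomial ℝ,
      IntervalIntegrable (fun s => (v s - p.eval s) * g.eval s) MeasureTheory.volume (-1:ℝ) 1 := by
    intro g
    apply ContinuousOn.intervalIntegrable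
    rw [huIcc]
    exact (hv.sub (Polynomial.continuous p).continuousOn).mul (Polynomial.continuous g).continuousOn
  -- step 1 : ∫ (v-p) G = (2k+1) ∫ (v-p) leg k
  have h1 : ∫ s in (-1:ℝ)..1, (v s - p.eval s) * G.eval s
      = (2*(k:ℝ)+1) * ∫ s in (-1:ℝ)..1, (v s - p.eval s) * (leg k).eval s := by
    have e1 : ∫ s in (-1:ℝ)..1, (v s - p.eval s) * G.eval s
        = ∑ m ∈ range (k+1), ∫ s in (-1:ℝ)..1,
            (2*(m:ℝ)+1) * ((v s - p.eval s) * (leg m).eval s) := by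
      rw [← intervalIntegral.integral_finset_sum]
      · apply intervalIntegral.integral_congr
        intro s _
        simp [hGev, Finset.mul_sum, mul_left_comm]
      · intro m _
        exact (hdg (leg m)).const_mul _
    rw [e1]
    have e2 : ∀ m ∈ range (k+1), (∫ s in (-1:ℝ)..1,
        (2*(m:ℝ)+1) * ((v s - p.eval s) * (leg m).eval s))
        = (2*(m:ℝ)+1) * ∫ s in (-1:ℝ)..1, (v s - p.eval s) * (leg m).eval s := by
      intro m _; exact intervalIntegral.integral_const_mul _ _
    rw [Finset.sum_congr rfl e2, Finset.sum_range_succ, Finset.sum_eq_zero, zero_add]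
    intro m hm
    rw [horthleg m (by simpa using hm), mul_zero]
  -- step 2 : split and use the kernel property
  have h2 : ∫ s in (-1:ℝ)..1, (v s - p.eval s) * G.eval s
      = (∫ s in (-1:ℝ)..1, v s * G.eval s) - ∫ s in (-1:ℝ)..1, p.eval s * G.eval s := by
    rw [← intervalIntegral.integral_sub (hvg G)
      (show IntervalIntegrable (fun s : ℝ => (p).eval s * (G).eval s) MeasureTheory.volume (-1) 1 from ((Polynomial.continuous _).mul (Polynomial.continuous _)).intervalIntegrable _ _)]
    apply intervalIntegral.integral_congr
    intro s _; ring
  have h3 : ∫ s in (-1:ℝ)..1, p.eval s * G.eval s = 2 * v 1 := by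
    rw [kernel k p hdeg, hval]
  have h4 : (∫ s in (-1 : ℝ)..1,
      v s * ∑ m ∈ Finset.range (k + 1), (2 * m + 1 : ℝ) * (leg m).eval s)
      = ∫ s in (-1:ℝ)..1, v s * G.eval s := by
    apply intervalIntegral.integral_congr
    intro s _
    simp only [hGev]
  rw [h4]
  rw [h2, h3] at h1
  linarith
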